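/- Under the assumption M ⊥ R | X, Y, G=1, the conditional expectation of the odds ratio satisfies E[OR(X,Y) | R=1, X=x, M=m, G=1] = p(Y=0 | R=1, X=x, M=m, G=1) / p(Y=0 | R=0, X=x, M=m, G=1), where OR(x,y) = [p(R=0|X=x,Y=y,G=1) p(R=1|X=x,Y=0,G=1)] / [p(R=1|X=x,Y=y,G=1) p(R=0|X=x,Y=0,G=1)]. -/

import Mathlib

open Finset Set Real

noncomputable def Pr {Ω : Type*} [Fintype Ω] (μ : Ω → ℝ) (A : Set Ω) : ℝ :=
  ∑ ω, A.indicator μ ω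

noncomputable def cPr {Ω : Type*} [Fintype Ω] (μ : Ω → ℝ) (A B : Set Ω) : ℝ :=
  Pr μ (A ∩ B) / Pr μ B

noncomputable def cE {Ω : Type*} [Fintype Ω] (μ : Ω → ℝ) (f : Ω → ℝ) (B : Set Ω) : ℝ :=
  (∑ ω, B.indicator (fun ω' => μ ω' * f ω') ω) / Pr μ B

noncomputable def OddsR {Ω 𝓧 : Type*} [Fintype Ω] (μ : Ω → ℝ) (X : Ω → 𝓧) (Y : Ω → ℝ)
    (R G : Ω → ℕ) (x : 𝓧) (y : ℝ) : ℝ :=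
  (cPr μ {ω | R ω = 0} {ω | X ω = x ∧ Y ω = y ∧ G ω = 1} *
      cPr μ {ω | R ω = 1} {ω | X ω = x ∧ Y ω = 0 ∧ G ω = 1}) /
  (cPr μ {ω | R ω = 1} {ω | X ω = x ∧ Y ω = y ∧ G ω = 1} *
      cPr μ {ω | R ω = 0} {ω | X ω = x ∧ Y ω = 0 ∧ G ω = 1})

section helpers
variable {Ω : Type*} [Fintype Ω]

lemma Pr_congr' (μ : Ω → ℝ) {A B : Set Ω} (h : A = B) : Pr μ A = Pr μ B := by rw [h]

lemma Pr_mono' (μ : Ω → ℝ) (h : ∀ ω, 0 ≤ μ ω) {A B : Set Ω} (hAB : A ⊆ B) :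
    Pr μ A ≤ Pr μ B :=
  Finset.sum_le_sum fun ω _ => Set.indicator_le_indicator_of_subset hAB h ω

lemma sum_fiber' (μ : Ω → ℝ) (Y : Ω → ℝ) (S : Set Ω) (F : ℝ → ℝ) :
    ∑ ω, S.indicator (fun ω' => μ ω' * F (Y ω')) ω
      = ∑ y ∈ Finset.univ.image Y, F y * Pr μ (S ∩ {ω | Y ω = y}) := by
  classical
  rw [← Finset.sum_fiberwise_of_maps_to
      (fun ω _ => Finset.mem_image_of_mem Y (Finset.mem_univ ω))
      (fun ω => S.indicator (fun ω' => μ ω' * F (Y ω')) ω)]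
  refine Finset.sum_congr rfl fun y _ => ?_
  rw [Pr, Finset.mul_sum, Finset.sum_filter]
  refine Finset.sum_congr rfl fun ω _ => ?_
  by_cases hy : Y ω = y
  · rw [if_pos hy]
    by_cases hS : ω ∈ S
    · rw [Set.indicator_of_mem hS, Set.indicator_of_mem (Set.mem_inter hS (by exact hy)), hy]
      ring
    · rw [Set.indicator_of_notMem hS,
        Set.indicator_of_notMem (fun hc => hS hc.1)]
      ring
  · rw [if_neg hy, Set.indicator_of_notMem (fun hc => hy hc.2)]
    ring

end helpers

theorem stmt2
    {Ω 𝓧 𝓜 : Type*} [Fintype Ω]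
    (μ : Ω → ℝ) (X : Ω → 𝓧) (M : Ω → 𝓜) (Y : Ω → ℝ) (R G : Ω → ℕ)
    (hμ0 : ∀ ω, 0 ≤ μ ω) (hμ1 : ∑ ω, μ ω = 1)
    (hR : ∀ ω, R ω = 0 ∨ R ω = 1)
    (h0Y : (0 : ℝ) ∈ Set.range Y)
    (hpos : ∀ x ∈ Set.range X, ∀ m ∈ Set.range M, ∀ y ∈ Set.range Y, ∀ r : ℕ,
      (r = 0 ∨ r = 1) →
      0 < Pr μ {ω | X ω = x ∧ M ω = m ∧ Y ω = y ∧ R ω = r ∧ G ω = 1})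
    (hCI : ∀ (m : 𝓜) (r : ℕ) (x : 𝓧) (y : ℝ),
      0 < Pr μ {ω | X ω = x ∧ Y ω = y ∧ G ω = 1} →
      cPr μ {ω | M ω = m ∧ R ω = r} {ω | X ω = x ∧ Y ω = y ∧ G ω = 1} =
        cPr μ {ω | M ω = m} {ω | X ω = x ∧ Y ω = y ∧ G ω = 1} *
        cPr μ {ω | R ω = r} {ω | X ω = x ∧ Y ω = y ∧ G ω = 1})
 :
    ∀ x ∈ Set.range X, ∀ m ∈ Set.range M,
      cE μ (fun ω => OddsR μ X Y R G (X ω) (Y ω))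
          {ω | R ω = 1 ∧ X ω = x ∧ M ω = m ∧ G ω = 1} =
        cPr μ {ω | Y ω = 0} {ω | R ω = 1 ∧ X ω = x ∧ M ω = m ∧ G ω = 1} /
          cPr μ {ω | Y ω = 0} {ω | R ω = 0 ∧ X ω = x ∧ M ω = m ∧ G ω = 1} := by
  classical
  intro x hx m hm
  set a : ℝ → ℕ → ℝ := fun y r => Pr μ {ω | X ω = x ∧ Y ω = y ∧ R ω = r ∧ G ω = 1} with ha_def
  set b : ℝ → ℕ → ℝ := fun y r =>
    Pr μ {ω | X ω = x ∧ M ω = m ∧ Y ω = y ∧ R ω = r ∧ G ω = 1} with hb_def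
  have hb : ∀ y ∈ Set.range Y, ∀ r : ℕ, (r = 0 ∨ r = 1) → 0 < b y r := by
    intro y hy r hr; exact hpos x hx m hm y hy r hr
  have ha : ∀ y ∈ Set.range Y, ∀ r : ℕ, (r = 0 ∨ r = 1) → 0 < a y r := by
    intro y hy r hr
    refine lt_of_lt_of_le (hb y hy r hr) (Pr_mono' μ hμ0 ?_)
    intro ω hω; exact ⟨hω.1, hω.2.2.1, hω.2.2.2.1, hω.2.2.2.2⟩
  have hPA : ∀ y ∈ Set.range Y, 0 < Pr μ {ω | X ω = x ∧ Y ω = y ∧ G ω = 1} := by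
    intro y hy
    refine lt_of_lt_of_le (ha y hy 1 (Or.inr rfl)) (Pr_mono' μ hμ0 ?_)
    intro ω hω; exact ⟨hω.1, hω.2.1, hω.2.2.2⟩
  have hkey : ∀ y ∈ Set.range Y, ∀ r : ℕ,
      b y r * Pr μ {ω | X ω = x ∧ Y ω = y ∧ G ω = 1} =
        Pr μ ({ω | M ω = m} ∩ {ω | X ω = x ∧ Y ω = y ∧ G ω = 1}) * a y r := by
    intro y hy r
    have hci := hCI m r x y (hPA y hy)
    rw [cPr, cPr, cPr] at hci
    have e1 : Pr μ ({ω | M ω = m ∧ R ω = r} ∩ {ω | X ω = x ∧ Y ω = y ∧ G ω = 1}) = b y r := by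
      refine Pr_congr' μ ?_; ext ω
      simp only [Set.mem_inter_iff, Set.mem_setOf_eq]; tauto
    have e2 : Pr μ ({ω | R ω = r} ∩ {ω | X ω = x ∧ Y ω = y ∧ G ω = 1}) = a y r := by
      refine Pr_congr' μ ?_; ext ω
      simp only [Set.mem_inter_iff, Set.mem_setOf_eq]; tauto
    rw [e1, e2] at hci
    have hne := ne_of_gt (hPA y hy)
    field_simp at hci
    apply mul_right_cancel₀ hne
    linear_combination (Pr μ {ω | X ω = x ∧ Y ω = y ∧ G ω = 1}) * hci
  have hba : ∀ y ∈ Set.range Y, b y 1 * a y 0 = b y 0 * a y 1 := by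
    intro y hy
    have h1 := hkey y hy 1
    have h0 := hkey y hy 0
    have hne := ne_of_gt (hPA y hy)
    apply mul_right_cancel₀ hne
    calc b y 1 * a y 0 * Pr μ {ω | X ω = x ∧ Y ω = y ∧ G ω = 1}
        = (b y 1 * Pr μ {ω | X ω = x ∧ Y ω = y ∧ G ω = 1}) * a y 0 := by ring
      _ = (Pr μ ({ω | M ω = m} ∩ {ω | X ω = x ∧ Y ω = y ∧ G ω = 1}) * a y 1) * a y 0 := by
          rw [h1]
      _ = (Pr μ ({ω | M ω = m} ∩ {ω | X ω = x ∧ Y ω = y ∧ G ω = 1}) * a y 0) * a y 1 := by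
          ring
      _ = (b y 0 * Pr μ {ω | X ω = x ∧ Y ω = y ∧ G ω = 1}) * a y 1 := by rw [h0]
      _ = b y 0 * a y 1 * Pr μ {ω | X ω = x ∧ Y ω = y ∧ G ω = 1} := by ring
  have hOR : ∀ y ∈ Set.range Y, OddsR μ X Y R G x y = (a y 0 * a 0 1) / (a y 1 * a 0 0) := by
    intro y hy
    have eR : ∀ (y' : ℝ) (r : ℕ),
        Pr μ ({ω | R ω = r} ∩ {ω | X ω = x ∧ Y ω = y' ∧ G ω = 1}) = a y' r := by
      intro y' r; refine Pr_congr' μ ?_; ext ω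
      simp only [Set.mem_inter_iff, Set.mem_setOf_eq]; tauto
    rw [OddsR, cPr, cPr, cPr, cPr, eR, eR, eR, eR]
    have hPAy := ne_of_gt (hPA y hy)
    have hPA0 := ne_of_gt (hPA 0 h0Y)
    field_simp
  have hprod : ∀ y ∈ Set.range Y,
      OddsR μ X Y R G x y * b y 1 = (b 0 1 / b 0 0) * b y 0 := by
    intro y hy
    rw [hOR y hy]
    have e1 := hba y hy
    have e2 := hba 0 h0Y
    have hb00 := ne_of_gt (hb 0 h0Y 0 (Or.inl rfl))
    have hay1 := ne_of_gt (ha y hy 1 (Or.inr rfl))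
    have ha00 := ne_of_gt (ha 0 h0Y 0 (Or.inl rfl))
    field_simp
    linear_combination a 0 1 * b 0 0 * e1 - b y 0 * a y 1 * e2
  set B1 : Set Ω := {ω | R ω = 1 ∧ X ω = x ∧ M ω = m ∧ G ω = 1} with hB1
  set B0 : Set Ω := {ω | R ω = 0 ∧ X ω = x ∧ M ω = m ∧ G ω = 1} with hB0
  have hB1fib : ∀ y, Pr μ (B1 ∩ {ω | Y ω = y}) = b y 1 := by
    intro y; refine Pr_congr' μ ?_; ext ω
    simp only [hB1, Set.mem_inter_iff, Set.mem_setOf_eq]; tauto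
  have hB0fib : ∀ y, Pr μ (B0 ∩ {ω | Y ω = y}) = b y 0 := by
    intro y; refine Pr_congr' μ ?_; ext ω
    simp only [hB0, Set.mem_inter_iff, Set.mem_setOf_eq]; tauto
  have hPrB1 : 0 < Pr μ B1 := by
    refine lt_of_lt_of_le (hb 0 h0Y 1 (Or.inr rfl)) (Pr_mono' μ hμ0 ?_)
    intro ω hω; exact ⟨hω.2.2.2.1, hω.1, hω.2.1, hω.2.2.2.2⟩
  have hPrB0 : 0 < Pr μ B0 := by
    refine lt_of_lt_of_le (hb 0 h0Y 0 (Or.inl rfl)) (Pr_mono' μ hμ0 ?_)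
    intro ω hω; exact ⟨hω.2.2.2.1, hω.1, hω.2.1, hω.2.2.2.2⟩
  have hnum : (∑ ω, B1.indicator (fun ω' => μ ω' * OddsR μ X Y R G (X ω') (Y ω')) ω)
      = (b 0 1 / b 0 0) * Pr μ B0 := by
    have hind : B1.indicator (fun ω' => μ ω' * OddsR μ X Y R G (X ω') (Y ω'))
        = B1.indicator (fun ω' => μ ω' * OddsR μ X Y R G x (Y ω')) := by
      apply Set.indicator_congr
      intro ω hω
      have hxω : X ω = x := hω.2.1
      simp only [hxω]
    rw [hind, sum_fiber' μ Y B1 (fun y => OddsR μ X Y R G x y)]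
    have hdecomp : Pr μ B0 = ∑ y ∈ Finset.univ.image Y, Pr μ (B0 ∩ {ω | Y ω = y}) := by
      have h := sum_fiber' μ Y B0 (fun _ => (1 : ℝ))
      simp only [mul_one, one_mul] at h
      rw [← h, Pr]
    rw [hdecomp, Finset.mul_sum]
    refine Finset.sum_congr rfl fun y hy => ?_
    have hyr : y ∈ Set.range Y := by
      rcases Finset.mem_image.mp hy with ⟨ω, _, hω⟩; exact ⟨ω, hω⟩
    rw [hB1fib, hB0fib, ← hprod y hyr]
  rw [cE, hnum, cPr, cPr]
  have eY1 : Pr μ ({ω | Y ω = 0} ∩ B1) = b 0 1 := by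
    refine Pr_congr' μ ?_; ext ω
    simp only [hB1, Set.mem_inter_iff, Set.mem_setOf_eq]; tauto
  have eY0 : Pr μ ({ω | Y ω = 0} ∩ B0) = b 0 0 := by
    refine Pr_congr' μ ?_; ext ω
    simp only [hB0, Set.mem_inter_iff, Set.mem_setOf_eq]; tauto
  rw [eY1, eY0]
  have hb01 := ne_of_gt (hb 0 h0Y 1 (Or.inr rfl))
  have hb00 := ne_of_gt (hb 0 h0Y 0 (Or.inl rfl))
  have hB1ne := ne_of_gt hPrB1
  have hB0ne := ne_of_gt hPrB0
  field_simp
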